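/- Let θ ∈ [0, π/2) and let C be a d×d complex matrix taking values in the sector Σ_θ, i.e. (C ξ, ξ) ∈ Σ_θ for all ξ ∈ ℂ^d. Write C = R + iB with R, B real, and let R_s = (R + Rᵀ)/2. Then ‖C ξ‖² ≤ 16 (1 + tan θ)² ‖R_s‖ (R_s ξ, ξ) for all ξ ∈ ℂ^d, where ‖R_s‖ is the operator norm. -/

import Mathlib

open Matrix

namespace Stmt7Aux

variable {d : ℕ}

/-- generic sesquilinear form of a matrix -/
noncomputable def gq (A : Matrix (Fin d) (Fin d) ℂ) (ξ η : Fin d → ℂ) : ℂ :=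
  A.mulVec ξ ⬝ᵥ star η

lemma gq_add (A : Matrix (Fin d) (Fin d) ℂ) (ξ η : Fin d → ℂ) :
    gq A (ξ + η) (ξ + η) = gq A ξ ξ + gq A ξ η + gq A η ξ + gq A η η := by
  simp only [gq, Matrix.mulVec_add, star_add, add_dotProduct, dotProduct_add]
  ring

lemma gq_sub (A : Matrix (Fin d) (Fin d) ℂ) (ξ η : Fin d → ℂ) :
    gq A (ξ - η) (ξ - η) = gq A ξ ξ - gq A ξ η - gq A η ξ + gq A η η := by
  simp only [gq, Matrix.mulVec_sub, star_sub, sub_dotProduct, dotProduct_sub]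
  ring

lemma gq_smul (A : Matrix (Fin d) (Fin d) ℂ) (c c' : ℂ) (ξ η : Fin d → ℂ) :
    gq A (c • ξ) (c' • η) = c * star c' * gq A ξ η := by
  simp only [gq, Matrix.mulVec_smul, star_smul, smul_dotProduct, dotProduct_smul,
    smul_eq_mul]
  ring

lemma gq_smul_right (A : Matrix (Fin d) (Fin d) ℂ) (c : ℂ) (ξ η : Fin d → ℂ) :
    gq A ξ (c • η) = star c * gq A ξ η := by
  simp only [gq, star_smul, dotProduct_smul, smul_eq_mul]

lemma gq_smul_left (A : Matrix (Fin d) (Fin d) ℂ) (c : ℂ) (ξ η : Fin d → ℂ) :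
    gq A (c • ξ) η = c * gq A ξ η := by
  simp only [gq, Matrix.mulVec_smul, smul_dotProduct, smul_eq_mul]

lemma key (C : Matrix (Fin d) (Fin d) ℂ) (ζ : Fin d → ℂ) :
    2 * (((Matrix.of fun k l => (((C k l).re + (C l k).re) / 2 : ℂ)).mulVec ζ) ⬝ᵥ star ζ).re
    = (C.mulVec ζ ⬝ᵥ star ζ).re + (C.mulVec (star ζ) ⬝ᵥ star (star ζ)).re := by
  simp only [Matrix.mulVec, dotProduct, Matrix.of_apply, Pi.star_apply,
    star_star, Complex.re_sum, Finset.sum_mul]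
  have conjre : ∀ z w : ℂ, (z * star w).re = (w * star z).re := by
    intro z w
    simp [Complex.mul_re]
    ring
  calc 2 * ∑ x, ∑ i, ((((C x i).re : ℂ) + ((C i x).re : ℂ)) / 2 * ζ i * star (ζ x)).re
      = ∑ x, ∑ i, ((C x i).re * (ζ i * star (ζ x)).re + (C i x).re * (ζ i * star (ζ x)).re) := by
        rw [Finset.mul_sum]
        refine Finset.sum_congr rfl fun x _ => ?_
        rw [Finset.mul_sum]
        refine Finset.sum_congr rfl fun i _ => ?_
        rw [mul_assoc, show ((((C x i).re : ℂ) + ((C i x).re : ℂ)) / 2) = ((((C x i).re + (C i x).re)/2 : ℝ) : ℂ) by push_cast; ring]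
        simp [Complex.mul_re]
        ring
    _ = (∑ x, ∑ i, (C x i).re * (ζ i * star (ζ x)).re)
        + ∑ x, ∑ i, (C i x).re * (ζ i * star (ζ x)).re := by
        simp [Finset.sum_add_distrib]
    _ = (∑ x, ∑ i, (C x i).re * (ζ i * star (ζ x)).re)
        + ∑ x, ∑ i, (C x i).re * (ζ i * star (ζ x)).re := by
        congr 1
        rw [Finset.sum_comm]
        refine Finset.sum_congr rfl fun x _ => Finset.sum_congr rfl fun i _ => ?_
        rw [conjre]
    _ = ∑ x, ∑ i, (C x i * ζ i * star (ζ x)).re + ∑ x, ∑ i, (C x i * star (ζ i) * ζ x).re := by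
        rw [← Finset.sum_add_distrib]
        simp only [← Finset.sum_add_distrib]
        refine Finset.sum_congr rfl fun x _ => Finset.sum_congr rfl fun i _ => ?_
        simp [Complex.mul_re]
        ring

end Stmt7Aux

open Stmt7Aux

/-- If `C` takes values in `Σ_θ`, `C = R + iB` with `R_s = (R + Rᵀ)/2`, and `N` is an
operator-norm bound for `R_s` (via its quadratic form), then
`‖Cξ‖² ≤ 16 (1 + tan θ)² N (R_s ξ, ξ)` for all `ξ ∈ ℂ^d`. -/
theorem stmt_7 (d : ℕ) (θ : ℝ) (hθ : θ ∈ Set.Ico 0 (Real.pi / 2))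
    (C : Matrix (Fin d) (Fin d) ℂ)
    (hsec : ∀ ξ : Fin d → ℂ,
      0 ≤ (C.mulVec ξ ⬝ᵥ star ξ).re ∧
      |(C.mulVec ξ ⬝ᵥ star ξ).im| ≤ Real.tan θ * (C.mulVec ξ ⬝ᵥ star ξ).re)
    (N : ℝ)
    (hN : ∀ η : Fin d → ℂ,
      (((Matrix.of fun k l => (((C k l).re + (C l k).re) / 2 : ℂ)).mulVec η) ⬝ᵥ star η).re ≤
        N * ∑ i, ‖η i‖ ^ 2)
    (ξ : Fin d → ℂ) :
    ∑ i, ‖C.mulVec ξ i‖ ^ 2 ≤ 16 * (1 + Real.tan θ) ^ 2 * N *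
      (((Matrix.of fun k l => (((C k l).re + (C l k).re) / 2 : ℂ)).mulVec ξ) ⬝ᵥ star ξ).re := by
  set Smat : Matrix (Fin d) (Fin d) ℂ :=
    Matrix.of fun k l => (((C k l).re + (C l k).re) / 2 : ℂ) with hSmat
  set sf : (Fin d → ℂ) → ℝ := fun ζ => ((Smat.mulVec ζ) ⬝ᵥ star ζ).re with hsf
  set af : (Fin d → ℂ) → (Fin d → ℂ) → ℂ := fun ξ η => C.mulVec ξ ⬝ᵥ star η with haf
  have htan : 0 ≤ Real.tan θ := Real.tan_nonneg_of_nonneg_of_le_pi_div_two hθ.1 (le_of_lt hθ.2)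
  set M : ℝ := 2 * (1 + Real.tan θ) with hMdef
  have hM : 0 < M := by positivity
  -- basic facts
  have hkey : ∀ ζ, 2 * sf ζ = (af ζ ζ).re + (af (star ζ) (star ζ)).re := fun ζ => key C ζ
  have hsnn : ∀ ζ, 0 ≤ sf ζ := by
    intro ζ
    have h1 := (hsec ζ).1
    have h2 := (hsec (star ζ)).1
    have := hkey ζ
    simp only [haf] at this
    linarith
  have habs : ∀ ζ, ‖af ζ ζ‖ ≤ M * sf ζ := by
    intro ζ
    have h1 := (hsec ζ).1
    have h2 := (hsec (star ζ)).1
    have h3 := (hsec ζ).2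
    have hk := hkey ζ
    simp only [haf] at hk h1 h2 h3 ⊢
    have h4 := Complex.norm_le_abs_re_add_abs_im (C.mulVec ζ ⬝ᵥ star ζ)
    rw [abs_of_nonneg h1] at h4
    nlinarith
  -- parallelogram for sf, and invariance under I-scaling and real scaling
  have hgq : ∀ ζ η, af ζ η = gq C ζ η := fun _ _ => rfl
  have hsq : ∀ ζ η : Fin d → ℂ, Smat.mulVec ζ ⬝ᵥ star η = gq Smat ζ η := fun _ _ => rfl
  have par : ∀ ζ η, sf (ζ + η) + sf (ζ - η) = 2 * sf ζ + 2 * sf η := by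
    intro ζ η
    have e : gq Smat (ζ + η) (ζ + η) + gq Smat (ζ - η) (ζ - η)
        = 2 * gq Smat ζ ζ + 2 * gq Smat η η := by
      rw [gq_add, gq_sub]; ring
    have := congrArg Complex.re e
    simpa [sf, hsq, Complex.add_re, Complex.mul_re] using this
  have sfI : ∀ η, sf (Complex.I • η) = sf η := by
    intro η
    have e : gq Smat (Complex.I • η) (Complex.I • η) = gq Smat η η := by
      rw [gq_smul]
      simp [Complex.ext_iff]
    have := congrArg Complex.re e
    simpa [sf, hsq] using this
  have sfsmul : ∀ (t : ℝ) η, sf ((t : ℂ) • η) = t ^ 2 * sf η := by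
    intro t η
    have e : gq Smat ((t : ℂ) • η) ((t : ℂ) • η) = ((t ^ 2 : ℝ) : ℂ) * gq Smat η η := by
      rw [gq_smul, show star ((t : ℂ)) = (t : ℂ) by simp]
      push_cast
      ring
    have := congrArg Complex.re e
    simp only [sf, hsq] at *
    rw [this, Complex.re_ofReal_mul]
  have polar : ∀ ζ η, ‖af ζ η + af η ζ‖ ≤ M * (sf ζ + sf η) := by
    intro ζ η
    have e : af (ζ + η) (ζ + η) - af (ζ - η) (ζ - η) = 2 * (af ζ η + af η ζ) := by
      simp only [hgq]
      rw [gq_add, gq_sub]; ring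
    have h2 : 2 * ‖af ζ η + af η ζ‖
        = ‖af (ζ + η) (ζ + η) - af (ζ - η) (ζ - η)‖ := by
      rw [e, norm_mul]
      simp
    have h3 : ‖af (ζ + η) (ζ + η) - af (ζ - η) (ζ - η)‖
        ≤ ‖af (ζ + η) (ζ + η)‖ + ‖af (ζ - η) (ζ - η)‖ := by
      simpa [sub_eq_add_neg] using
        norm_add_le (af (ζ + η) (ζ + η)) (-(af (ζ - η) (ζ - η)))
    have h4 := habs (ζ + η)
    have h5 := habs (ζ - η)
    have h6 := par ζ η
    have h7 : M * sf (ζ + η) + M * sf (ζ - η) = 2 * (M * (sf ζ + sf η)) := by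
      rw [← mul_add, h6]; ring
    linarith
  have polar2 : ∀ ζ η, ‖af ζ η - af η ζ‖ ≤ M * (sf ζ + sf η) := by
    intro ζ η
    have e : af ζ (Complex.I • η) + af (Complex.I • η) ζ
        = Complex.I * (af η ζ - af ζ η) := by
      simp only [hgq]
      rw [gq_smul_right, gq_smul_left, Complex.star_def, Complex.conj_I]
      ring
    have h1 := polar ζ (Complex.I • η)
    rw [e, norm_mul, Complex.norm_I, one_mul, sfI η] at h1
    calc ‖af ζ η - af η ζ‖ = ‖af η ζ - af ζ η‖ := by
          rw [← norm_neg]; ring_nf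
      _ ≤ M * (sf ζ + sf η) := h1
  have absa : ∀ ζ η, ‖af ζ η‖ ≤ M * (sf ζ + sf η) := by
    intro ζ η
    have h1 := polar ζ η
    have h2 := polar2 ζ η
    have h3 : 2 * ‖af ζ η‖
        = ‖(af ζ η + af η ζ) + (af ζ η - af η ζ)‖ := by
      rw [show (af ζ η + af η ζ) + (af ζ η - af η ζ) = 2 * af ζ η by ring, norm_mul]
      simp
    have h4 := norm_add_le (af ζ η + af η ζ) (af ζ η - af η ζ)
    linarith
  have scaled : ∀ u : ℝ, 0 < u → ∀ ζ η, ‖af ζ η‖ ≤ M * (u * sf ζ + sf η / u) := by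
    intro u hu ζ η
    set t := Real.sqrt u with ht
    have ht0 : 0 < t := Real.sqrt_pos.mpr hu
    have ht2 : t ^ 2 = u := Real.sq_sqrt hu.le
    have e : af (((t : ℝ) : ℂ) • ζ) (((t⁻¹ : ℝ) : ℂ) • η) = af ζ η := by
      simp only [hgq]
      rw [gq_smul, show star (((t⁻¹ : ℝ) : ℂ)) = ((t⁻¹ : ℝ) : ℂ) by simp,
        ← Complex.ofReal_mul, mul_inv_cancel₀ ht0.ne', Complex.ofReal_one, one_mul]
    have h2 := absa (((t : ℝ) : ℂ) • ζ) (((t⁻¹ : ℝ) : ℂ) • η)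
    rw [e, sfsmul t ζ, sfsmul t⁻¹ η, ht2] at h2
    have h3 : (t⁻¹) ^ 2 = u⁻¹ := by rw [← ht2, inv_pow]
    rw [h3] at h2
    calc ‖af ζ η‖ ≤ M * (u * sf ζ + u⁻¹ * sf η) := h2
      _ = M * (u * sf ζ + sf η / u) := by rw [inv_mul_eq_div]
  -- endgame
  set η := C.mulVec ξ with hη
  set P : ℝ := ∑ i, ‖η i‖ ^ 2 with hP
  have hPre : (af ξ η).re = P := by
    simp only [haf, hP, dotProduct, Pi.star_apply, Complex.re_sum]
    refine Finset.sum_congr rfl fun i _ => ?_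
    rw [← hη]
    simp [Complex.mul_re, Complex.sq_norm, Complex.normSq_apply]
  have hP0 : 0 ≤ P := Finset.sum_nonneg fun i _ => by positivity
  have hsη : sf η ≤ N * P := hN η
  have hineq : ∀ u : ℝ, 0 < u → P * u ≤ M * sf ξ * u ^ 2 + M * N * P := by
    intro u hu
    have h1 := scaled u hu ξ η
    have h2 : P ≤ ‖af ξ η‖ := hPre ▸ Complex.re_le_norm _
    have h3 : P ≤ M * (u * sf ξ + sf η / u) := le_trans h2 h1
    have h5 := mul_le_mul_of_nonneg_right h3 hu.le
    have h6 : M * (u * sf ξ + sf η / u) * u = M * sf ξ * u ^ 2 + M * sf η := by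
      field_simp
    rw [h6] at h5
    nlinarith [hsη, hM.le]
  have hNsf : 0 ≤ N * sf ξ := by
    rcases (hsnn ξ).lt_or_eq with hs | hs
    · have hq := hN ξ
      have hq2 : 0 ≤ ∑ i, ‖ξ i‖ ^ 2 := Finset.sum_nonneg fun i _ => by positivity
      nlinarith
    · rw [← hs, mul_zero]
  show P ≤ 16 * (1 + Real.tan θ) ^ 2 * N * sf ξ
  have hcoef : 16 * (1 + Real.tan θ) ^ 2 = 4 * M ^ 2 := by rw [hMdef]; ring
  rw [hcoef]
  rcases hP0.lt_or_eq with hPpos | hPz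
  · rcases (hsnn ξ).lt_or_eq with hs | hs
    · -- sf ξ > 0
      have hu : 0 < P / (2 * M * sf ξ) := by positivity
      have h := hineq _ hu
      set v := P / (2 * M * sf ξ) with hv
      have hveq : v * (2 * M * sf ξ) = P := div_mul_cancel₀ _ (by positivity)
      have hPv : P * v = 2 * M * sf ξ * v ^ 2 := by rw [← hveq]; ring
      rw [hPv] at h
      have h7 : M * sf ξ * v ^ 2 ≤ M * N * P := by linarith
      rw [← hveq] at h7 ⊢
      -- h7 : M * sfξ * v² ≤ M*N*(v*(2*M*sfξ)); goal : v*(2*M*sfξ) ≤ 4*M²*N*sfξ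
      nlinarith [mul_pos hM hs, hu, h7]
    · -- sf ξ = 0
      have hu : 0 < M * N + 1 := by
        have hN0 : 0 ≤ N := by nlinarith [hsnn η, hsη, hPpos]
        positivity
      have h := hineq _ hu
      rw [← hs] at h ⊢
      nlinarith [h]
  · rw [← hPz]
    nlinarith [hNsf, sq_nonneg (1 + Real.tan θ), sq_nonneg M]
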